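/- Let H be a finite simple graph with no isolated vertices, and let S_2(H) be the graph obtained from H by subdividing each edge twice (replacing each edge uv by a path u, u_e, v_e, v). Then the pair (V(H), V(S_2(H)) \ V(H)) is a DT-pair in S_2(H): the original vertices form a dominating set and the subdivision vertices form a total dominating set. -/

import Mathlib

/-- `D` is a dominating set of `G`: every vertex outside `D` has a neighbor in `D`. -/
def Dominates {V : Type*} (G : SimpleGraph V) (D : Set V) : Prop :=
  ∀ v, v ∉ D → ∃ u ∈ D, G.Adj v u

/-- `T` is a total dominating set of `G`: every vertex has a neighbor in `T`. -/
def TotallyDominates {V : Type*} (G : SimpleGraph V) (T : Set V) : Prop :=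
  ∀ v, ∃ u ∈ T, G.Adj v u

/-- `(D, T)` is a DT-pair in `G`. -/
def DTPair {V : Type*} (G : SimpleGraph V) (D T : Set V) : Prop :=
  Disjoint D T ∧ Dominates G D ∧ TotallyDominates G T

/-- `G` has a DT-pair. -/
def HasDTPair {V : Type*} (G : SimpleGraph V) : Prop :=
  ∃ D T : Set V, DTPair G D T

/-- The 2-subdivision `S₂(H)` of `H`: each edge `uv` of `H` is replaced by the path
`u — u_e — v_e — v`. The subdivision vertex `u_e` on the edge `uv` (nearer to `u`)
is encoded as `Sum.inr ⟨(u, v), _⟩`. -/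
def S2 {V : Type*} (H : SimpleGraph V) :
    SimpleGraph (V ⊕ {p : V × V // H.Adj p.1 p.2}) where
  Adj a b := match a, b with
    | Sum.inl u, Sum.inr p => u = p.1.1
    | Sum.inr p, Sum.inl u => u = p.1.1
    | Sum.inr p, Sum.inr q => p.1.1 = q.1.2 ∧ p.1.2 = q.1.1
    | Sum.inl _, Sum.inl _ => False
  symm := by
    constructor
    rintro (u | p) (w | q) h
    · exact h
    · exact h
    · exact h
    · exact ⟨h.2.symm, h.1.symm⟩
  loopless := by
    constructor
    rintro (u | p) h
    · exact h
    · exact H.loopless.irrefl p.1.1 (h.1 ▸ p.2)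

/-- In the 2-subdivision of a graph `H` with no isolated vertices, the original
vertices form a dominating set and the subdivision vertices form a total dominating
set; together they form a DT-pair. -/
theorem S2_DTPair {V : Type*} (H : SimpleGraph V) (h : ∀ v : V, ∃ u, H.Adj v u) :
    DTPair (S2 H) (Set.range Sum.inl) (Set.range Sum.inr) := by
  refine ⟨?_, ?_, ?_⟩
  · rw [Set.disjoint_iff_inter_eq_empty]
    ext x
    simp only [Set.mem_inter_iff, Set.mem_range, Set.mem_empty_iff_false, iff_false]
    rintro ⟨⟨u, rfl⟩, ⟨p, hp⟩⟩
    exact absurd hp (by simp)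
  · rintro (v | p) hv
    · exact absurd (Set.mem_range_self v) hv
    · exact ⟨Sum.inl p.1.1, Set.mem_range_self _, rfl⟩
  · rintro (v | p)
    · obtain ⟨u, hu⟩ := h v
      exact ⟨Sum.inr ⟨(v, u), hu⟩, Set.mem_range_self _, rfl⟩
    · exact ⟨Sum.inr ⟨(p.1.2, p.1.1), p.2.symm⟩, Set.mem_range_self _, ⟨rfl, rfl⟩⟩
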